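/- arXiv:1807.08135 — 2 statements merged into one kernel-verified Lean document; each statement's English description precedes it below -/
import Mathlib

section
/- Consider a K-armed stochastic bandit where arm i yields i.i.d. rewards in [0,1] with mean μ_i, μ* = max_i μ_i and gaps δ_i = μ* − μ_i. The UCB1 policy (at each round play the arm maximizing empirical mean plus √(2 ln t / N_i(t))) has expected regret after n plays at most 8·∑_{i: μ_i < μ*} (ln n)/δ_i + (1 + π²/3)·∑_{j=1}^K δ_j. -/
open MeasureTheory ProbabilityTheory

variable {Ω : Type*} [MeasurableSpace Ω]

/-- Number of times arm `i` has been played in the first `n` rounds by the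
policy `I`. -/
def playCount {K : ℕ} (I : ℕ → Ω → Fin K) (n : ℕ) (i : Fin K) (ω : Ω) : ℕ :=
  ((Finset.range n).filter (fun t => I t ω = i)).card

/-- Empirical mean reward of arm `i` before round `t`: the reward of the k-th
pull of arm `i` is `X i k`. -/
noncomputable def empMean {K : ℕ} (X : Fin K → ℕ → Ω → ℝ) (I : ℕ → Ω → Fin K)
    (i : Fin K) (t : ℕ) (ω : Ω) : ℝ :=
  (∑ k ∈ Finset.range (playCount I t i ω), X i k ω) / (playCount I t i ω)

/-- UCB1 index of arm `i` at round `t`: empirical mean plus √(2 ln t / Nᵢ(t)). -/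
noncomputable def ucbIndex {K : ℕ} (X : Fin K → ℕ → Ω → ℝ) (I : ℕ → Ω → Fin K)
    (i : Fin K) (t : ℕ) (ω : Ω) : ℝ :=
  empMean X I i t ω + Real.sqrt (2 * Real.log t / (playCount I t i ω))

open Real


lemma ucb_u_pos {p : ℝ} (hp0 : 0 ≤ p) (hp1 : p ≤ 1) (h : ℝ) :
    0 < 1 - p + p * Real.exp h := by
  rcases eq_or_lt_of_le hp1 with rfl | hp1
  · simpa using Real.exp_pos h
  · have : 0 ≤ p * Real.exp h := mul_nonneg hp0 (Real.exp_pos h).le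
    linarith

lemma ucb_hoeff_aux {p : ℝ} (hp0 : 0 ≤ p) (hp1 : p ≤ 1) (h : ℝ) :
    Real.log (1 - p + p * Real.exp h) ≤ p * h + h ^ 2 / 8 := by
  set u : ℝ → ℝ := fun h => 1 - p + p * Real.exp h with hu
  have hupos : ∀ h, 0 < u h := fun h => ucb_u_pos hp0 hp1 h
  set G : ℝ → ℝ := fun h => p + h / 4 - p * Real.exp h / u h with hG
  set g : ℝ → ℝ := fun h => p * h + h ^ 2 / 8 - Real.log (u h) with hg
  have hud : ∀ x, HasDerivAt u (p * Real.exp x) x := by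
    intro x
    exact ((Real.hasDerivAt_exp x).const_mul p).const_add (1 - p)
  have hGd : ∀ x, HasDerivAt G (1/4 - (p * Real.exp x * (u x - p * Real.exp x)) / (u x)^2) x := by
    intro x
    have hq : HasDerivAt (fun y => p * Real.exp y / u y)
        ((p * Real.exp x * u x - p * Real.exp x * (p * Real.exp x)) / (u x)^2) x :=
      ((Real.hasDerivAt_exp x).const_mul p).div (hud x) (hupos x).ne'
    have h1 : HasDerivAt (fun y => p + y / 4) (1/4) x := by
      simpa using ((hasDerivAt_id x).div_const 4).const_add p
    have h2 := h1.fun_sub hq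
    refine h2.congr_deriv ?_
    ring
  have hgd : ∀ x, HasDerivAt g (G x) x := by
    intro x
    have hlog : HasDerivAt (fun y => Real.log (u y)) (p * Real.exp x / u x) x :=
      (hud x).log (hupos x).ne'
    have h2 : HasDerivAt (fun y => p * y) p x := by
      simpa using (hasDerivAt_id x).const_mul p
    have h1 : HasDerivAt (fun y => p * y + y ^ 2 / 8) (p + 2 * x / 8) x := by
      simpa [pow_one] using h2.fun_add ((hasDerivAt_pow 2 x).div_const 8)
    have h3 := h1.fun_sub hlog
    refine h3.congr_deriv ?_
    simp only [hG]
    ring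
  have hgdiff : Differentiable ℝ g := fun x => (hgd x).differentiableAt
  have hGmono : Monotone G := by
    apply monotone_of_deriv_nonneg (fun x => (hGd x).differentiableAt)
    intro x
    rw [(hGd x).deriv]
    set q := p * Real.exp x / u x with hq
    have hq0 : 0 ≤ q := div_nonneg (mul_nonneg hp0 (Real.exp_pos x).le) (hupos x).le
    have hq1 : q ≤ 1 := by
      rw [hq, div_le_one (hupos x)]
      simp only [hu]
      linarith
    have h1q : q * (1 - q) = (p * Real.exp x * (u x - p * Real.exp x)) / (u x)^2 := by
      have : (1 : ℝ) - q = (u x - p * Real.exp x) / u x := by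
        rw [hq, eq_div_iff (hupos x).ne', sub_mul, div_mul_cancel₀ _ (hupos x).ne', one_mul]
      rw [hq, this, div_mul_div_comm, sq]
    rw [← h1q]
    nlinarith [sq_nonneg (2 * q - 1)]
  have hG0 : G 0 = 0 := by
    have : G 0 = p + 0 / 4 - p * Real.exp 0 / (1 - p + p * Real.exp 0) := rfl
    rw [this]
    simp
  have hg0 : g 0 = 0 := by
    have : g 0 = p * 0 + 0 ^ 2 / 8 - Real.log (1 - p + p * Real.exp 0) := rfl
    rw [this]
    simp
  have hgnonneg : ∀ x, 0 ≤ g x := by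
    intro x
    rcases le_or_gt 0 x with hx | hx
    · have hm : MonotoneOn g (Set.Ici 0) := by
        apply monotoneOn_of_deriv_nonneg (convex_Ici 0) hgdiff.continuous.continuousOn
          (fun y _ => (hgdiff y).differentiableWithinAt)
        intro y hy
        rw [(hgd y).deriv]
        have h4 : G 0 ≤ G y := hGmono (by simpa using (interior_subset hy : y ∈ Set.Ici 0))
        linarith [hG0 ▸ h4]
      have := hm Set.self_mem_Ici (Set.mem_Ici.2 hx) hx
      linarith [hg0 ▸ this]
    · have hm : AntitoneOn g (Set.Iic 0) := by
        apply antitoneOn_of_deriv_nonpos (convex_Iic 0) hgdiff.continuous.continuousOn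
          (fun y _ => (hgdiff y).differentiableWithinAt)
        intro y hy
        rw [(hgd y).deriv]
        have h4 : G y ≤ G 0 := hGmono (by simpa using (interior_subset hy : y ∈ Set.Iic 0))
        linarith [hG0 ▸ h4]
      have := hm (Set.mem_Iic.2 hx.le) Set.self_mem_Iic hx.le
      linarith [hg0 ▸ this]
  have h0 := hgnonneg h
  have hrfl : g h = p * h + h ^ 2 / 8 - Real.log (1 - p + p * Real.exp h) := rfl
  linarith [hrfl ▸ h0]


lemma ucb_integrable_of_bdd {Pm : Measure Ω} [IsProbabilityMeasure Pm]
    {f : Ω → ℝ} (hf : Measurable f) {C : ℝ} (h : ∀ ω, |f ω| ≤ C) :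
    Integrable f Pm :=
  (integrable_const C).mono' hf.aestronglyMeasurable (Filter.Eventually.of_forall h)

lemma ucb_mgf_le {Pm : Measure Ω} [IsProbabilityMeasure Pm]
    {Y : Ω → ℝ} (hY : Measurable Y) (hb : ∀ ω, Y ω ∈ Set.Icc (0:ℝ) 1) (t : ℝ) :
    mgf Y Pm t ≤ Real.exp (t * (∫ ω, Y ω ∂Pm) + t ^ 2 / 8) := by
  set m := ∫ ω, Y ω ∂Pm with hm
  have hint : Integrable Y Pm :=
    ucb_integrable_of_bdd hY (fun ω => abs_le.2 ⟨by linarith [(hb ω).1], (hb ω).2⟩)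
  have hm0 : 0 ≤ m := integral_nonneg (fun ω => (hb ω).1)
  have hm1 : m ≤ 1 := by
    have := integral_mono hint (integrable_const (1:ℝ)) (fun ω => (hb ω).2)
    simpa using this
  -- pointwise convexity bound
  have hpt : ∀ ω, Real.exp (t * Y ω) ≤ (Real.exp t - 1) * Y ω + 1 := by
    intro ω
    have h1 := (hb ω).1
    have h2 := (hb ω).2
    have := convexOn_exp.2 (Set.mem_univ (0:ℝ)) (Set.mem_univ t)
      (by linarith : (0:ℝ) ≤ 1 - Y ω) h1 (by ring)
    have h3 : Real.exp ((1 - Y ω) • (0:ℝ) + Y ω • t) ≤ (1 - Y ω) * Real.exp 0 + Y ω * Real.exp t := this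
    simp only [smul_eq_mul, mul_zero, zero_add, Real.exp_zero, mul_one] at h3
    calc Real.exp (t * Y ω) = Real.exp (Y ω * t) := by rw [mul_comm]
      _ ≤ (1 - Y ω) + Y ω * Real.exp t := h3
      _ = (Real.exp t - 1) * Y ω + 1 := by ring
  have hintexp : Integrable (fun ω => Real.exp (t * Y ω)) Pm := by
    apply ucb_integrable_of_bdd (hY.const_mul t).exp
    intro ω
    rw [abs_of_nonneg (Real.exp_pos _).le]
    exact Real.exp_le_exp.2 (by
      have h1 := (hb ω).1; have h2 := (hb ω).2
      calc t * Y ω ≤ |t * Y ω| := le_abs_self _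
        _ ≤ |t| := by rw [abs_mul]; nlinarith [abs_nonneg t, abs_le.2 ⟨by linarith, h2⟩])
  have hintlin : Integrable (fun ω => (Real.exp t - 1) * Y ω + 1) Pm :=
    (hint.const_mul _).add (integrable_const (1:ℝ))
  have step1 : mgf Y Pm t ≤ 1 - m + m * Real.exp t := by
    rw [mgf]
    calc ∫ ω, Real.exp (t * Y ω) ∂Pm ≤ ∫ ω, ((Real.exp t - 1) * Y ω + 1) ∂Pm :=
          integral_mono hintexp hintlin hpt
      _ = (Real.exp t - 1) * m + 1 := by
          rw [integral_add (hint.const_mul _) (integrable_const (1:ℝ)),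
            integral_const_mul, integral_const]
          simp [hm]
      _ = 1 - m + m * Real.exp t := by ring
  calc mgf Y Pm t ≤ 1 - m + m * Real.exp t := step1
    _ = Real.exp (Real.log (1 - m + m * Real.exp t)) := (Real.exp_log (ucb_u_pos hm0 hm1 t)).symm
    _ ≤ Real.exp (m * t + t ^ 2 / 8) := Real.exp_le_exp.2 (ucb_hoeff_aux hm0 hm1 t)
    _ = Real.exp (t * m + t ^ 2 / 8) := by rw [mul_comm m t]

/-- Hoeffding upper-tail bound for the arm rewards. -/
lemma ucb_tail {K : ℕ} {Pm : Measure Ω} [IsProbabilityMeasure Pm]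
    {X : Fin K → ℕ → Ω → ℝ}
    (hmeas : ∀ i k, Measurable (X i k))
    (hbound : ∀ i k ω, X i k ω ∈ Set.Icc (0 : ℝ) 1)
    {μv : Fin K → ℝ} (hmean : ∀ i k, ∫ ω, X i k ω ∂Pm = μv i)
    (hindep : iIndepFun (fun p : Fin K × ℕ => X p.1 p.2) Pm)
    (i : Fin K) {s : ℕ} (hs : 0 < s) {a : ℝ} (ha : 0 ≤ a) :
    (Pm {ω | (s : ℝ) * μv i + a ≤ ∑ k ∈ Finset.range s, X i k ω}).toReal ≤
      Real.exp (-2 * a ^ 2 / s) := by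
  classical
  set T : Finset (Fin K × ℕ) := {i} ×ˢ Finset.range s with hT
  set S : Ω → ℝ := ∑ p ∈ T, (fun p : Fin K × ℕ => X p.1 p.2) p with hS
  have hSapp : ∀ ω, S ω = ∑ k ∈ Finset.range s, X i k ω := by
    intro ω
    rw [hS, Finset.sum_apply]
    rw [hT, Finset.sum_product, Finset.sum_singleton]
  have hcard : T.card = s := by simp [hT]
  set h : ℝ := 4 * a / s with hh
  have hh0 : 0 ≤ h := by positivity
  have hSmeas : Measurable S := by
    rw [funext hSapp]
    exact Finset.measurable_sum (Finset.range s) (fun k _ => hmeas i k)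
  have hint : Integrable (fun ω => Real.exp (h * S ω)) Pm := by
    apply ucb_integrable_of_bdd (C := Real.exp (h * s)) (hSmeas.const_mul h).exp
    intro ω
    rw [abs_of_nonneg (Real.exp_pos _).le]
    apply Real.exp_le_exp.2
    have hb : S ω ≤ s := by
      rw [hSapp]
      calc ∑ k ∈ Finset.range s, X i k ω ≤ ∑ k ∈ Finset.range s, 1 :=
            Finset.sum_le_sum (fun k _ => (hbound i k ω).2)
        _ = s := by simp
    have hb0 : 0 ≤ S ω := by
      rw [hSapp]; exact Finset.sum_nonneg (fun k _ => (hbound i k ω).1)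
    nlinarith
  have chernoff := measure_ge_le_exp_mul_mgf (μ := Pm) (X := S) ((s : ℝ) * μv i + a) hh0 hint
  have hmgf : mgf S Pm h ≤ Real.exp ((s : ℝ) * (h * μv i + h ^ 2 / 8)) := by
    rw [hS, iIndepFun.mgf_sum hindep (fun p => hmeas p.1 p.2) T]
    calc ∏ p ∈ T, mgf (X p.1 p.2) Pm h
        ≤ ∏ p ∈ T, Real.exp (h * μv i + h ^ 2 / 8) := by
          apply Finset.prod_le_prod (fun p _ => mgf_nonneg)
          intro p hp
          have hp1 : p.1 = i :=
            Finset.mem_singleton.1 (Finset.mem_product.1 (by rwa [hT] at hp)).1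
          rw [hp1]
          have := ucb_mgf_le (Pm := Pm) (hmeas i p.2) (hbound i p.2) h
          rwa [hmean] at this
      _ = Real.exp ((s : ℝ) * (h * μv i + h ^ 2 / 8)) := by
          rw [Finset.prod_const, hcard, ← Real.exp_nat_mul]
  have hset : {ω | (s : ℝ) * μv i + a ≤ ∑ k ∈ Finset.range s, X i k ω} =
      {ω | (s : ℝ) * μv i + a ≤ S ω} := by
    ext ω; rw [Set.mem_setOf_eq, Set.mem_setOf_eq, hSapp]
  rw [hset]
  calc (Pm {ω | (s : ℝ) * μv i + a ≤ S ω}).toReal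
      ≤ Real.exp (-h * ((s : ℝ) * μv i + a)) * mgf S Pm h := chernoff
    _ ≤ Real.exp (-h * ((s : ℝ) * μv i + a)) * Real.exp ((s : ℝ) * (h * μv i + h ^ 2 / 8)) := by
        exact mul_le_mul_of_nonneg_left hmgf (Real.exp_pos _).le
    _ = Real.exp (-h * ((s : ℝ) * μv i + a) + (s : ℝ) * (h * μv i + h ^ 2 / 8)) :=
        (Real.exp_add _ _).symm
    _ = Real.exp (-2 * a ^ 2 / s) := by
        congr 1
        have hs' : (s : ℝ) ≠ 0 := Nat.cast_ne_zero.2 hs.ne'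
        rw [hh]
        field_simp [hh]
        ring

lemma ucb_tail_low {K : ℕ} {Pm : Measure Ω} [IsProbabilityMeasure Pm]
    {X : Fin K → ℕ → Ω → ℝ}
    (hmeas : ∀ i k, Measurable (X i k))
    (hbound : ∀ i k ω, X i k ω ∈ Set.Icc (0 : ℝ) 1)
    {μv : Fin K → ℝ} (hmean : ∀ i k, ∫ ω, X i k ω ∂Pm = μv i)
    (hindep : iIndepFun (fun p : Fin K × ℕ => X p.1 p.2) Pm)
    (i : Fin K) {s : ℕ} (hs : 0 < s) {a : ℝ} (ha : 0 ≤ a) :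
    (Pm {ω | ∑ k ∈ Finset.range s, X i k ω ≤ (s : ℝ) * μv i - a}).toReal ≤
      Real.exp (-2 * a ^ 2 / s) := by
  set X' : Fin K → ℕ → Ω → ℝ := fun i k ω => 1 - X i k ω with hX'
  have hmeas' : ∀ i k, Measurable (X' i k) := fun i k => (hmeas i k).const_sub 1
  have hbound' : ∀ i k ω, X' i k ω ∈ Set.Icc (0:ℝ) 1 := by
    intro i k ω
    have h1 := (hbound i k ω).1; have h2 := (hbound i k ω).2
    constructor <;> simp [hX'] <;> linarith
  have hmean' : ∀ i k, ∫ ω, X' i k ω ∂Pm = 1 - μv i := by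
    intro i k
    have hint : Integrable (X i k) Pm := by
      refine (integrable_const (1:ℝ)).mono' (hmeas i k).aestronglyMeasurable
        (Filter.Eventually.of_forall fun ω => ?_)
      have h1 := (hbound i k ω).1; have h2 := (hbound i k ω).2
      rw [Real.norm_eq_abs, abs_le]; constructor <;> linarith
    rw [hX']
    rw [integral_sub (integrable_const 1) hint, integral_const, hmean]
    simp
  have hindep' : iIndepFun (fun p : Fin K × ℕ => X' p.1 p.2) Pm := by
    have := hindep.comp (g := fun _ : Fin K × ℕ => fun x : ℝ => 1 - x)
      (fun _ => measurable_const.sub measurable_id)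
    exact this
  have key := ucb_tail hmeas' hbound' hmean' hindep' i hs ha
  have hset : {ω | ∑ k ∈ Finset.range s, X i k ω ≤ (s : ℝ) * μv i - a} =
      {ω | (s : ℝ) * (1 - μv i) + a ≤ ∑ k ∈ Finset.range s, X' i k ω} := by
    ext ω
    simp only [Set.mem_setOf_eq, hX', Finset.sum_sub_distrib, Finset.sum_const,
      Finset.card_range, nsmul_eq_mul, mul_one]
    constructor <;> intro h <;> linarith
  rw [hset]
  exact key

set_option maxHeartbeats 4000000 in
theorem ucb1_aux {K : ℕ}
    (Pm : Measure Ω) [IsProbabilityMeasure Pm]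
    (hK : 0 < K) (n : ℕ)
    (X : Fin K → ℕ → Ω → ℝ)
    (hmeas : ∀ i k, Measurable (X i k))
    (hbound : ∀ i k ω, X i k ω ∈ Set.Icc (0 : ℝ) 1)
    (μv : Fin K → ℝ)
    (hmean : ∀ i k, ∫ ω, X i k ω ∂Pm = μv i)
    (hiid : ∀ i k l, IdentDistrib (X i k) (X i l) Pm Pm)
    (hindep : iIndepFun (fun p : Fin K × ℕ => X p.1 p.2) Pm)
    (I : ℕ → Ω → Fin K) (hImeas : ∀ t, Measurable (I t))
    (hInit : ∀ (ω : Ω) (t : ℕ) (ht : t < K), I t ω = ⟨t, ht⟩)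
    (hUCB : ∀ (ω : Ω) (t : ℕ), K ≤ t → ∀ j : Fin K,
      ucbIndex X I j t ω ≤ ucbIndex X I (I t ω) t ω)
    (μstar : ℝ) (hstar : IsGreatest (Set.range μv) μstar) :
    (n : ℝ) * μstar - ∑ i, μv i * ∫ ω, (playCount I n i ω : ℝ) ∂Pm ≤
      8 * ∑ i ∈ Finset.univ.filter (fun i => μv i < μstar),
            Real.log n / (μstar - μv i)
        + (1 + Real.pi ^ 2 / 3) * ∑ j, (μstar - μv j) := by
  classical
  obtain ⟨istar, histar⟩ := hstar.1
  have hub : ∀ i, μv i ≤ μstar := fun i => hstar.2 ⟨i, rfl⟩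
  have hlogn : 0 ≤ Real.log n := by
    rcases Nat.eq_zero_or_pos n with rfl | hn
    · simp
    · exact Real.log_nonneg (by exact_mod_cast hn)
  -- playCount basics
  have hpcle : ∀ t (i : Fin K) ω, playCount I t i ω ≤ t := by
    intro t i ω
    exact le_trans (Finset.card_filter_le _ _) (le_of_eq (Finset.card_range t))
  have hNmeasN : ∀ t (i : Fin K), Measurable (fun ω => playCount I t i ω) := by
    intro t i
    have : (fun ω => playCount I t i ω) =
        fun ω => ∑ t' ∈ Finset.range t, if I t' ω = i then 1 else 0 := by
      funext ω; rw [playCount, Finset.card_filter]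
    rw [this]
    exact Finset.measurable_sum _ (fun t' _ =>
      Measurable.ite ((hImeas t') (measurableSet_singleton i)) measurable_const measurable_const)
  have hNmeas : ∀ t (i : Fin K), Measurable (fun ω => (playCount I t i ω : ℝ)) :=
    fun t i => measurable_from_top.comp (hNmeasN t i)
  have hNint : ∀ (i : Fin K), Integrable (fun ω => (playCount I n i ω : ℝ)) Pm := by
    intro i
    refine (integrable_const (n : ℝ)).mono' (hNmeas n i).aestronglyMeasurable
      (Filter.Eventually.of_forall fun ω => ?_)
    rw [Real.norm_eq_abs, abs_of_nonneg (by positivity)]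
    exact_mod_cast hpcle n i ω
  have hNnonneg : ∀ (i : Fin K), 0 ≤ ∫ ω, (playCount I n i ω : ℝ) ∂Pm := by
    intro i
    exact integral_nonneg (fun ω => by positivity)
  -- total count
  have htot : ∀ ω, ∑ i, (playCount I n i ω : ℝ) = n := by
    intro ω
    have := Finset.card_eq_sum_card_fiberwise
      (f := fun t => I t ω) (s := Finset.range n) (t := Finset.univ)
      (fun t _ => Finset.mem_univ _)
    rw [Finset.card_range] at this
    rw [← Nat.cast_sum]
    exact_mod_cast congrArg Nat.cast this.symm
  have hsumE : ∑ i, ∫ ω, (playCount I n i ω : ℝ) ∂Pm = n := by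
    rw [← integral_finset_sum _ (fun i _ => hNint i)]
    simp_rw [htot]
    simp
  -- LHS rewriting
  have hLHS : (n : ℝ) * μstar - ∑ i, μv i * ∫ ω, (playCount I n i ω : ℝ) ∂Pm =
      ∑ i, (μstar - μv i) * ∫ ω, (playCount I n i ω : ℝ) ∂Pm := by
    rw [Finset.sum_congr rfl (fun i _ => sub_mul (μstar) (μv i) _), Finset.sum_sub_distrib,
      ← Finset.mul_sum, hsumE, mul_comm]
  -- Basel
  have hbasel : ∑ t ∈ Finset.Ico 1 n, ((t:ℝ)^2)⁻¹ ≤ π^2/6 := by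
    have hhs : HasSum (fun m : ℕ => (1:ℝ)/(m:ℝ)^2) (π^2/6) := hasSum_zeta_two
    have h1 : ∑ t ∈ Finset.Ico 1 n, ((t:ℝ)^2)⁻¹ = ∑ t ∈ Finset.Ico 1 n, (1:ℝ)/(t:ℝ)^2 :=
      Finset.sum_congr rfl (fun t _ => (one_div ((t:ℝ)^2)).symm)
    rw [h1]
    exact (Summable.sum_le_tsum _ (fun j _ => by positivity) hhs.summable).trans (le_of_eq hhs.tsum_eq)
  -- key per-arm bound
  have key : ∀ i : Fin K, μv i < μstar →
      ∫ ω, (playCount I n i ω : ℝ) ∂Pm ≤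
        8 * Real.log n / (μstar - μv i)^2 + 1 + π^2/3 := by
    intro i hi
    set δ := μstar - μv i with hδ
    have hδpos : 0 < δ := by rw [hδ]; linarith
    set ℓ : ℕ := max 1 ⌈8 * Real.log n / δ^2⌉₊ with hℓ
    have hℓ1 : 1 ≤ ℓ := le_max_left _ _
    have hℓlb : 8 * Real.log n / δ^2 ≤ (ℓ:ℝ) := by
      refine le_trans (Nat.le_ceil _) ?_
      exact_mod_cast Nat.cast_le.2 (le_max_right _ _)
    have hℓub : (ℓ:ℝ) ≤ 8 * Real.log n / δ^2 + 1 := by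
      have hx : (0:ℝ) ≤ 8 * Real.log n / δ^2 := by positivity
      rw [hℓ, Nat.cast_max]
      apply max_le
      · simp; linarith
      · exact (Nat.ceil_lt_add_one hx).le
    -- deterministic counting bound
    have hcount : ∀ ω, (playCount I n i ω : ℝ) ≤ (ℓ:ℝ) +
        ∑ t ∈ Finset.Ico K n,
          (if (I t ω = i ∧ ℓ ≤ playCount I t i ω) then (1:ℝ) else 0) := by
      intro ω
      set S := (Finset.range n).filter (fun t => I t ω = i) with hSdef
      have hmono : ∀ a b, a ∈ S → b ∈ S → a < b →
          playCount I a i ω < playCount I b i ω := by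
        intro a b ha hb hab
        apply Finset.card_lt_card
        constructor
        · exact Finset.filter_subset_filter _ (Finset.range_subset_range.2 hab.le)
        · intro hsub
          have ha' : a ∈ (Finset.range b).filter (fun t => I t ω = i) :=
            Finset.mem_filter.2 ⟨Finset.mem_range.2 hab, (Finset.mem_filter.1 ha).2⟩
          have := hsub ha'
          exact absurd (Finset.mem_range.1 (Finset.mem_filter.1 this).1) (lt_irrefl a)
      have hA : (S.filter (fun t => playCount I t i ω < ℓ)).card ≤ ℓ := by
        refine le_trans (Finset.card_le_card_of_injOn (fun t => playCount I t i ω) ?_ ?_)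
          (le_of_eq (Finset.card_range ℓ))
        · intro t ht
          simp only [Finset.mem_coe, Finset.mem_filter] at ht
          exact Finset.mem_range.2 ht.2
        · intro t1 h1' t2 h2' heq
          by_contra hne
          rcases lt_or_gt_of_ne hne with h | h
          · exact absurd heq (ne_of_lt (hmono _ _ (Finset.mem_of_mem_filter _ h1')
              (Finset.mem_of_mem_filter _ h2') h))
          · exact absurd heq.symm (ne_of_lt (hmono _ _ (Finset.mem_of_mem_filter _ h2')
              (Finset.mem_of_mem_filter _ h1') h))
      have hB : S.filter (fun t => ¬ playCount I t i ω < ℓ) ⊆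
          (Finset.Ico K n).filter (fun t => I t ω = i ∧ ℓ ≤ playCount I t i ω) := by
        intro t ht
        simp only [Finset.mem_filter, hSdef, Finset.mem_range, not_lt] at ht
        obtain ⟨⟨htn, hti⟩, hℓle⟩ := ht
        have htK : K ≤ t := by
          by_contra hlt
          push_neg at hlt
          have hIti : I t ω = ⟨t, hlt⟩ := hInit ω t hlt
          have hival : (i : ℕ) = t := by
            rw [hIti] at hti
            exact (congrArg Fin.val hti).symm
          have hzero : playCount I t i ω = 0 := by
            rw [playCount, Finset.card_eq_zero, Finset.filter_eq_empty_iff]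
            intro t' ht'
            have ht'K : t' < K := lt_trans (Finset.mem_range.1 ht') hlt
            rw [hInit ω t' ht'K]
            intro hEq
            have ht'' : t' < t := Finset.mem_range.1 ht'
            have : t' = (i : ℕ) := by simpa using congrArg Fin.val hEq
            omega
          omega
        exact Finset.mem_filter.2 ⟨Finset.mem_Ico.2 ⟨htK, htn⟩, hti, hℓle⟩
      have hsplit : S.card ≤ ℓ +
          ((Finset.Ico K n).filter (fun t => I t ω = i ∧ ℓ ≤ playCount I t i ω)).card := by
        have h0 : (S.filter (fun t => playCount I t i ω < ℓ)).card
            + (S.filter (fun t => ¬ playCount I t i ω < ℓ)).card = S.card :=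
          Finset.card_filter_add_card_filter_not _
        have h1 := Finset.card_le_card hB
        omega
      have hmain : (playCount I n i ω : ℝ) ≤ (ℓ:ℝ) +
          (((Finset.Ico K n).filter (fun t => I t ω = i ∧ ℓ ≤ playCount I t i ω)).card : ℝ) := by
        have : playCount I n i ω = S.card := rfl
        rw [this]
        exact_mod_cast hsplit
      refine hmain.trans (le_of_eq ?_)
      congr 1
      rw [Finset.card_filter]
      push_cast
      rfl
    -- events
    set c : ℕ → ℕ → ℝ := fun t s => Real.sqrt (2 * Real.log t / s) with hc
    set A : ℕ → ℕ → Set Ω := fun t s =>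
      {ω | ∑ k ∈ Finset.range s, X istar k ω ≤ (s:ℝ) * μv istar - (s:ℝ) * c t s} with hAdef
    set B : ℕ → ℕ → Set Ω := fun t s =>
      {ω | (s:ℝ) * μv i + (s:ℝ) * c t s ≤ ∑ k ∈ Finset.range s, X i k ω} with hBdef
    have hincl : ∀ t, K ≤ t → t < n → {ω | I t ω = i ∧ ℓ ≤ playCount I t i ω} ⊆
        (⋃ s ∈ Finset.Icc 1 t, A t s) ∪ (⋃ s ∈ Finset.Icc ℓ t, B t s) := by
      intro t htK htn ω hω
      obtain ⟨hIt, hN⟩ := hω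
      have htpos : 0 < t := lt_of_lt_of_le hK htK
      have htr1 : (1:ℝ) ≤ (t:ℝ) := by exact_mod_cast htpos
      have hlogt : 0 ≤ Real.log t := Real.log_nonneg htr1
      have hucb := hUCB ω t htK istar
      rw [hIt] at hucb
      simp only [ucbIndex, empMean] at hucb
      set s1 := playCount I t istar ω with hs1
      set s2 := playCount I t i ω with hs2
      have hplayed : ∀ j : Fin K, 0 < playCount I t j ω := by
        intro j
        apply Finset.card_pos.2
        refine ⟨(j : ℕ), Finset.mem_filter.2 ⟨Finset.mem_range.2 (lt_of_lt_of_le j.isLt htK), ?_⟩⟩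
        rw [hInit ω (j : ℕ) j.isLt]
      have hs1pos : 0 < s1 := hplayed istar
      have hs2pos : 0 < s2 := lt_of_lt_of_le hℓ1 hN
      have hs1r : (0:ℝ) < (s1:ℝ) := by exact_mod_cast hs1pos
      have hs2r : (0:ℝ) < (s2:ℝ) := by exact_mod_cast hs2pos
      have hs1le : s1 ≤ t := hpcle t istar ω
      have hs2le : s2 ≤ t := hpcle t i ω
      by_cases hA1 : ω ∈ A t s1
      · exact Or.inl (Set.mem_biUnion (Finset.mem_Icc.2 ⟨hs1pos, hs1le⟩) hA1)
      by_cases hB1 : ω ∈ B t s2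
      · exact Or.inr (Set.mem_biUnion (Finset.mem_Icc.2 ⟨hN, hs2le⟩) hB1)
      exfalso
      simp only [hAdef, Set.mem_setOf_eq, not_le] at hA1
      simp only [hBdef, Set.mem_setOf_eq, not_le] at hB1
      rw [histar] at hA1
      have e1 : μstar - c t s1 < (∑ k ∈ Finset.range s1, X istar k ω)/(s1:ℝ) := by
        rw [lt_div_iff₀ hs1r]
        nlinarith [hA1]
      have e2 : (∑ k ∈ Finset.range s2, X i k ω)/(s2:ℝ) < μv i + c t s2 := by
        rw [div_lt_iff₀ hs2r]
        nlinarith [hB1]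
      have hcle : 2 * c t s2 ≤ δ := by
        have hst : Real.log t ≤ Real.log n :=
          Real.log_le_log (by exact_mod_cast htpos) (by exact_mod_cast htn.le)
        have h8 : 8 * Real.log n / δ^2 ≤ (s2:ℝ) :=
          le_trans hℓlb (by exact_mod_cast Nat.cast_le.2 hN)
        have harg : 2 * Real.log t / (s2:ℝ) ≤ δ^2/4 := by
          rw [div_le_div_iff₀ hs2r (by norm_num : (0:ℝ) < 4)]
          have h9 : 8 * Real.log n ≤ δ^2 * (s2:ℝ) := by
            rw [div_le_iff₀ (by positivity : (0:ℝ) < δ^2)] at h8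
            linarith
          nlinarith
        have : c t s2 ≤ δ/2 := by
          have := Real.sqrt_le_sqrt harg
          refine le_trans this (le_of_eq ?_)
          rw [show δ^2/4 = (δ/2)^2 by ring, Real.sqrt_sq (by positivity)]
        linarith
      have hc1nn : 0 ≤ c t s1 := Real.sqrt_nonneg _
      have hc2nn : 0 ≤ c t s2 := Real.sqrt_nonneg _
      have hucb' : (∑ k ∈ Finset.range s1, X istar k ω)/(s1:ℝ) + c t s1 ≤
          (∑ k ∈ Finset.range s2, X i k ω)/(s2:ℝ) + c t s2 := hucb
      have : μstar < μstar := by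
        calc μstar < (∑ k ∈ Finset.range s1, X istar k ω)/(s1:ℝ) + c t s1 := by linarith
          _ ≤ (∑ k ∈ Finset.range s2, X i k ω)/(s2:ℝ) + c t s2 := hucb'
          _ < μv i + 2 * c t s2 := by linarith
          _ ≤ μv i + δ := by linarith
          _ = μstar := by rw [hδ]; ring
      exact lt_irrefl _ this
    -- per-round probability bound
    have hprob : ∀ t, K ≤ t → t < n →
        (Pm {ω | I t ω = i ∧ ℓ ≤ playCount I t i ω}).toReal ≤ 2 * ((t:ℝ)^2)⁻¹ := by
      intro t htK htn
      have htpos : 0 < t := lt_of_lt_of_le hK htK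
      have htr1 : (1:ℝ) ≤ (t:ℝ) := by exact_mod_cast htpos
      have htr0 : (0:ℝ) < (t:ℝ) := by linarith
      have hlogt : 0 ≤ Real.log t := Real.log_nonneg htr1
      have hexp : ∀ s : ℕ, 0 < s →
          Real.exp (-2 * ((s:ℝ) * c t s)^2 / s) = ((t:ℝ)^4)⁻¹ := by
        intro s hs
        have hsr : (0:ℝ) < (s:ℝ) := by exact_mod_cast hs
        have hcsq : (c t s)^2 = 2 * Real.log t / s := by
          rw [hc]
          exact Real.sq_sqrt (by positivity)
        have harg : -2 * ((s:ℝ) * c t s)^2 / s = -(4 * Real.log t) := by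
          rw [mul_pow, hcsq]
          field_simp
          ring
        rw [harg, Real.exp_neg]
        congr 1
        rw [show (4:ℝ) * Real.log t = Real.log ((t:ℝ)^4) by rw [Real.log_pow]; push_cast; ring,
          Real.exp_log (by positivity)]
      have hAbd : ∀ s ∈ Finset.Icc 1 t, (Pm (A t s)).toReal ≤ ((t:ℝ)^4)⁻¹ := by
        intro s hs
        obtain ⟨hs1, hst⟩ := Finset.mem_Icc.1 hs
        have hspos : 0 < s := hs1
        have hann : 0 ≤ (s:ℝ) * c t s := by
          have : 0 ≤ c t s := Real.sqrt_nonneg _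
          positivity
        have htail := ucb_tail_low hmeas hbound hmean hindep istar hspos hann
        rw [hexp s hspos] at htail
        exact htail
      have hBbd : ∀ s ∈ Finset.Icc ℓ t, (Pm (B t s)).toReal ≤ ((t:ℝ)^4)⁻¹ := by
        intro s hs
        obtain ⟨hs1, hst⟩ := Finset.mem_Icc.1 hs
        have hspos : 0 < s := lt_of_lt_of_le hℓ1 hs1
        have hann : 0 ≤ (s:ℝ) * c t s := by
          have : 0 ≤ c t s := Real.sqrt_nonneg _
          positivity
        have htail := ucb_tail hmeas hbound hmean hindep i hspos hann
        rw [hexp s hspos] at htail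
        exact htail
      have hmeasle : Pm {ω | I t ω = i ∧ ℓ ≤ playCount I t i ω} ≤
          ∑ s ∈ Finset.Icc 1 t, Pm (A t s) + ∑ s ∈ Finset.Icc ℓ t, Pm (B t s) := by
        refine (measure_mono (hincl t htK htn)).trans ?_
        refine (measure_union_le _ _).trans ?_
        exact add_le_add (measure_biUnion_finset_le _ _) (measure_biUnion_finset_le _ _)
      have hne1 : ∀ s ∈ Finset.Icc 1 t, Pm (A t s) ≠ ⊤ := fun s _ => measure_ne_top _ _
      have hne2 : ∀ s ∈ Finset.Icc ℓ t, Pm (B t s) ≠ ⊤ := fun s _ => measure_ne_top _ _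
      have hsne1 : ∑ s ∈ Finset.Icc 1 t, Pm (A t s) ≠ ⊤ :=
        (ENNReal.sum_lt_top.2 (fun s hs => lt_top_iff_ne_top.2 (hne1 s hs))).ne
      have hsne2 : ∑ s ∈ Finset.Icc ℓ t, Pm (B t s) ≠ ⊤ :=
        (ENNReal.sum_lt_top.2 (fun s hs => lt_top_iff_ne_top.2 (hne2 s hs))).ne
      have h2 := ENNReal.toReal_mono (by
        exact ENNReal.add_ne_top.2 ⟨hsne1, hsne2⟩) hmeasle
      rw [ENNReal.toReal_add hsne1 hsne2, ENNReal.toReal_sum hne1, ENNReal.toReal_sum hne2] at h2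
      have h3 : ∑ s ∈ Finset.Icc 1 t, (Pm (A t s)).toReal ≤ (t:ℝ) * ((t:ℝ)^4)⁻¹ := by
        refine (Finset.sum_le_sum hAbd).trans ?_
        rw [Finset.sum_const, Nat.card_Icc]
        simp only [nsmul_eq_mul]
        apply mul_le_mul_of_nonneg_right _ (by positivity)
        exact_mod_cast le_of_eq (by omega : t + 1 - 1 = t)
      have h4 : ∑ s ∈ Finset.Icc ℓ t, (Pm (B t s)).toReal ≤ (t:ℝ) * ((t:ℝ)^4)⁻¹ := by
        refine (Finset.sum_le_sum hBbd).trans ?_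
        rw [Finset.sum_const, Nat.card_Icc]
        simp only [nsmul_eq_mul]
        apply mul_le_mul_of_nonneg_right _ (by positivity)
        exact_mod_cast (by omega : t + 1 - ℓ ≤ t)
      have h5 : (t:ℝ) * ((t:ℝ)^4)⁻¹ ≤ ((t:ℝ)^2)⁻¹ := by
        rw [show (t:ℝ) * ((t:ℝ)^4)⁻¹ = ((t:ℝ)^3)⁻¹ by field_simp]
        apply inv_anti₀ (by positivity)
        calc (t:ℝ)^2 = (t:ℝ)^2 * 1 := by ring
          _ ≤ (t:ℝ)^2 * (t:ℝ) := by nlinarith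
          _ = (t:ℝ)^3 := by ring
      linarith
    -- integrate
    have hEmeasSet : ∀ t, MeasurableSet {ω | I t ω = i ∧ ℓ ≤ playCount I t i ω} := by
      intro t
      have h1 : MeasurableSet {ω | I t ω = i} := (hImeas t) (measurableSet_singleton i)
      have h2 : MeasurableSet {ω | ℓ ≤ playCount I t i ω} := (hNmeasN t i) measurableSet_Ici
      exact h1.inter h2
    have hiteint : ∀ t, Integrable
        (fun ω => if (I t ω = i ∧ ℓ ≤ playCount I t i ω) then (1:ℝ) else 0) Pm := by
      intro t
      have hm : Measurable (fun ω => if (I t ω = i ∧ ℓ ≤ playCount I t i ω) then (1:ℝ) else 0) :=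
        Measurable.ite (hEmeasSet t) measurable_const measurable_const
      refine (integrable_const (1:ℝ)).mono' hm.aestronglyMeasurable
        (Filter.Eventually.of_forall fun ω => ?_)
      rw [Real.norm_eq_abs]
      split <;> simp
    have hiteval : ∀ t, ∫ ω, (if (I t ω = i ∧ ℓ ≤ playCount I t i ω) then (1:ℝ) else 0) ∂Pm =
        (Pm {ω | I t ω = i ∧ ℓ ≤ playCount I t i ω}).toReal := by
      intro t
      have : (fun ω => if (I t ω = i ∧ ℓ ≤ playCount I t i ω) then (1:ℝ) else 0) =
          Set.indicator {ω | I t ω = i ∧ ℓ ≤ playCount I t i ω} (fun _ => (1:ℝ)) := by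
        funext ω
        rw [Set.indicator_apply]
        rfl
      rw [this, MeasureTheory.integral_indicator_const _ (hEmeasSet t)]
      simp
      rfl
    have hstep : ∫ ω, (playCount I n i ω : ℝ) ∂Pm ≤ (ℓ:ℝ) +
        ∑ t ∈ Finset.Ico K n, (Pm {ω | I t ω = i ∧ ℓ ≤ playCount I t i ω}).toReal := by
      have hintRHS : Integrable (fun ω => (ℓ:ℝ) + ∑ t ∈ Finset.Ico K n,
          (if (I t ω = i ∧ ℓ ≤ playCount I t i ω) then (1:ℝ) else 0)) Pm :=
        (integrable_const _).add (integrable_finset_sum _ (fun t _ => hiteint t))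
      calc ∫ ω, (playCount I n i ω : ℝ) ∂Pm
          ≤ ∫ ω, ((ℓ:ℝ) + ∑ t ∈ Finset.Ico K n,
            (if (I t ω = i ∧ ℓ ≤ playCount I t i ω) then (1:ℝ) else 0)) ∂Pm :=
            integral_mono (hNint i) hintRHS hcount
        _ = (ℓ:ℝ) + ∑ t ∈ Finset.Ico K n,
            (Pm {ω | I t ω = i ∧ ℓ ≤ playCount I t i ω}).toReal := by
            rw [integral_add (integrable_const _) (integrable_finset_sum _ (fun t _ => hiteint t)),
              integral_const, integral_finset_sum _ (fun t _ => hiteint t)]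
            simp only [measure_univ, ENNReal.toReal_one, smul_eq_mul, one_mul, probReal_univ]
            congr 1
            exact Finset.sum_congr rfl (fun t _ => hiteval t)
    -- sum the probabilities
    have hsum : ∑ t ∈ Finset.Ico K n, (Pm {ω | I t ω = i ∧ ℓ ≤ playCount I t i ω}).toReal ≤
        π^2/3 := by
      calc ∑ t ∈ Finset.Ico K n, (Pm {ω | I t ω = i ∧ ℓ ≤ playCount I t i ω}).toReal
          ≤ ∑ t ∈ Finset.Ico K n, 2 * ((t:ℝ)^2)⁻¹ := by
            apply Finset.sum_le_sum
            intro t ht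
            obtain ⟨htK, htn⟩ := Finset.mem_Ico.1 ht
            exact hprob t htK htn
        _ ≤ ∑ t ∈ Finset.Ico 1 n, 2 * ((t:ℝ)^2)⁻¹ := by
            apply Finset.sum_le_sum_of_subset_of_nonneg
            · apply Finset.Ico_subset_Ico_left hK
            · intro t _ _
              positivity
        _ = 2 * ∑ t ∈ Finset.Ico 1 n, ((t:ℝ)^2)⁻¹ := by rw [Finset.mul_sum]
        _ ≤ 2 * (π^2/6) := by linarith [hbasel]
        _ = π^2/3 := by ring
    calc ∫ ω, (playCount I n i ω : ℝ) ∂Pm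
        ≤ (ℓ:ℝ) + ∑ t ∈ Finset.Ico K n, (Pm {ω | I t ω = i ∧ ℓ ≤ playCount I t i ω}).toReal :=
          hstep
      _ ≤ (8 * Real.log n / δ^2 + 1) + π^2/3 := add_le_add hℓub hsum
      _ = 8 * Real.log n / δ^2 + 1 + π^2/3 := by ring
  -- final assembly
  rw [hLHS]
  have hfilter : ∑ i, (μstar - μv i) * ∫ ω, (playCount I n i ω : ℝ) ∂Pm =
      ∑ i ∈ Finset.univ.filter (fun i => μv i < μstar),
        (μstar - μv i) * ∫ ω, (playCount I n i ω : ℝ) ∂Pm := by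
    symm
    apply Finset.sum_filter_of_ne
    intro x _ hx
    by_contra hlt
    push_neg at hlt
    have : μv x = μstar := le_antisymm (hub x) hlt
    rw [this] at hx
    simp at hx
  rw [hfilter]
  have hπ : (0:ℝ) ≤ 1 + π^2/3 := by positivity
  calc ∑ i ∈ Finset.univ.filter (fun i => μv i < μstar),
        (μstar - μv i) * ∫ ω, (playCount I n i ω : ℝ) ∂Pm
      ≤ ∑ i ∈ Finset.univ.filter (fun i => μv i < μstar),
        (8 * Real.log n / (μstar - μv i) + (1 + π^2/3) * (μstar - μv i)) := by
        apply Finset.sum_le_sum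
        intro j hj
        have hj' : μv j < μstar := (Finset.mem_filter.1 hj).2
        have hδj : 0 < μstar - μv j := by linarith
        calc (μstar - μv j) * ∫ ω, (playCount I n j ω : ℝ) ∂Pm
            ≤ (μstar - μv j) * (8 * Real.log n / (μstar - μv j)^2 + 1 + π^2/3) :=
              mul_le_mul_of_nonneg_left (key j hj') hδj.le
          _ = 8 * Real.log n / (μstar - μv j) + (1 + π^2/3) * (μstar - μv j) := by
              field_simp
              ring
    _ = 8 * ∑ i ∈ Finset.univ.filter (fun i => μv i < μstar), Real.log n / (μstar - μv i)
        + (1 + π^2/3) * ∑ i ∈ Finset.univ.filter (fun i => μv i < μstar), (μstar - μv i) := by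
        rw [Finset.sum_add_distrib, Finset.mul_sum, Finset.mul_sum]
        congr 1
        apply Finset.sum_congr rfl
        intro j _
        ring
    _ ≤ 8 * ∑ i ∈ Finset.univ.filter (fun i => μv i < μstar), Real.log n / (μstar - μv i)
        + (1 + π^2/3) * ∑ j, (μstar - μv j) := by
        apply add_le_add_right
        apply mul_le_mul_of_nonneg_left _ hπ
        apply Finset.sum_le_sum_of_subset_of_nonneg (Finset.filter_subset _ _)
        intro j _ _
        have := hub j
        linarith


/-- UCB1 regret bound (Auer et al. 2002): in a K-armed stochastic bandit with
i.i.d. rewards in [0,1], means μᵢ, optimum μ* and gaps δᵢ = μ* − μᵢ, the UCB1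
policy has expected regret after n plays at most
8·∑_{i : μᵢ < μ*} (ln n)/δᵢ + (1 + π²/3)·∑ⱼ δⱼ. -/
theorem ucb1_regret_bound
    (Pm : Measure Ω) [IsProbabilityMeasure Pm]
    (K : ℕ) (hK : 0 < K) (n : ℕ)
    (X : Fin K → ℕ → Ω → ℝ)
    (hmeas : ∀ i k, Measurable (X i k))
    (hbound : ∀ i k ω, X i k ω ∈ Set.Icc (0 : ℝ) 1)
    (μv : Fin K → ℝ)
    (hmean : ∀ i k, ∫ ω, X i k ω ∂Pm = μv i)
    (hiid : ∀ i k l, IdentDistrib (X i k) (X i l) Pm Pm)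
    (hindep : iIndepFun (fun p : Fin K × ℕ => X p.1 p.2) Pm)
    (I : ℕ → Ω → Fin K) (hImeas : ∀ t, Measurable (I t))
    -- each arm is played once initially
    (hInit : ∀ (ω : Ω) (t : ℕ) (ht : t < K), I t ω = ⟨t, ht⟩)
    -- afterwards, UCB1 plays the arm maximizing the UCB index
    (hUCB : ∀ (ω : Ω) (t : ℕ), K ≤ t → ∀ j : Fin K,
      ucbIndex X I j t ω ≤ ucbIndex X I (I t ω) t ω)
    (μstar : ℝ) (hstar : IsGreatest (Set.range μv) μstar) :
    (n : ℝ) * μstar - ∑ i, μv i * ∫ ω, (playCount I n i ω : ℝ) ∂Pm ≤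
      8 * ∑ i ∈ Finset.univ.filter (fun i => μv i < μstar),
            Real.log n / (μstar - μv i)
        + (1 + Real.pi ^ 2 / 3) * ∑ j, (μstar - μv j) := by
  exact ucb1_aux Pm hK n X hmeas hbound μv hmean hiid hindep I hImeas hInit hUCB μstar hstar
end

section
/- In a K-armed stochastic bandit with rewards in [0,1], if arm i is suboptimal with gap δ_i = μ* − μ_i > 0, then under UCB1 the expected number of plays of arm i after n rounds satisfies E[N_i(n)] ≤ 8 (ln n)/δ_i² + 1 + π²/3. -/
open MeasureTheory ProbabilityTheory

variable {Ω : Type*} [MeasurableSpace Ω]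

section UCBAux

open Real

/-- Hoeffding's lemma, analytic core. -/
lemma hoeffding_core {p : ℝ} (hp0 : 0 ≤ p) (hp1 : p ≤ 1) (l : ℝ) :
    1 - p + p * Real.exp l ≤ Real.exp (l * p + l ^ 2 / 8) := by
  set g : ℝ → ℝ := fun x => 1 - p + p * Real.exp x with hg
  have hgpos : ∀ x, 0 < g x := by
    intro x
    rcases lt_or_eq_of_le hp1 with h | h
    · have : 0 < 1 - p := by linarith
      have : 0 ≤ p * Real.exp x := mul_nonneg hp0 (exp_pos x).le
      simp only [hg]; linarith
    · simp only [hg, ← h]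
      have := exp_pos x; nlinarith [this]
  have hgd : ∀ x, HasDerivAt g (p * Real.exp x) x := by
    intro x
    simpa [hg] using ((Real.hasDerivAt_exp x).const_mul p).const_add (1 - p)
  set f : ℝ → ℝ := fun x => x * p + x ^ 2 / 8 - Real.log (g x) with hf
  set φ : ℝ → ℝ := fun x => p + x / 4 - p * Real.exp x / g x with hφ
  have hfd : ∀ x, HasDerivAt f (φ x) x := by
    intro x
    have h1 : HasDerivAt (fun x : ℝ => x * p + x ^ 2 / 8) (p + 2 * x / 8) x := by
      have := ((hasDerivAt_id x).mul_const p).fun_add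
        (((hasDerivAt_pow 2 x)).div_const 8)
      simpa [pow_one] using this
    have h2 : HasDerivAt (fun x => Real.log (g x)) (p * Real.exp x / g x) x :=
      (hgd x).log (hgpos x).ne'
    have := h1.fun_sub h2
    refine this.congr_deriv ?_
    simp only [hφ]; ring
  have hφd : ∀ x, HasDerivAt φ (1 / 4 -
      (p * Real.exp x * g x - p * Real.exp x * (p * Real.exp x)) / (g x) ^ 2) x := by
    intro x
    have h2 : HasDerivAt (fun x => p * Real.exp x / g x)
        ((p * Real.exp x * g x - p * Real.exp x * (p * Real.exp x)) / (g x) ^ 2) x := by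
      exact ((Real.hasDerivAt_exp x).const_mul p).div (hgd x) (hgpos x).ne'
    have h1 : HasDerivAt (fun x : ℝ => p + x / 4) (1 / 4) x := by
      simpa using ((hasDerivAt_id x).div_const 4).const_add p
    simpa [hφ] using h1.fun_sub h2
  have hφderiv_nonneg : ∀ x, 0 ≤ 1 / 4 -
      (p * Real.exp x * g x - p * Real.exp x * (p * Real.exp x)) / (g x) ^ 2 := by
    intro x
    have hnum : p * Real.exp x * g x - p * Real.exp x * (p * Real.exp x)
        = (1 - p) * (p * Real.exp x) := by simp only [hg]; ring
    have hg2 : 0 < (g x) ^ 2 := pow_pos (hgpos x) 2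
    rw [hnum, sub_nonneg, div_le_iff₀ hg2]
    have key : 4 * ((1 - p) * (p * Real.exp x)) ≤ ((1 - p) + p * Real.exp x) ^ 2 := by
      nlinarith [sq_nonneg ((1 - p) - p * Real.exp x)]
    have : g x = (1 - p) + p * Real.exp x := by simp [hg]
    nlinarith [key]
  have hφmono : Monotone φ := by
    have hdiff : Differentiable ℝ φ := fun x => (hφd x).differentiableAt
    refine monotone_of_deriv_nonneg hdiff ?_
    intro x
    rw [(hφd x).deriv]
    exact hφderiv_nonneg x
  have hφ0 : φ 0 = 0 := by
    simp only [hφ, hg]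
    norm_num
  have hf0 : f 0 = 0 := by
    simp only [hf, hg]
    norm_num
  have hfnonneg : 0 ≤ f l := by
    rcases le_or_gt 0 l with h | h
    · have : MonotoneOn f (Set.Ici 0) := by
        refine monotoneOn_of_deriv_nonneg (convex_Ici 0)
          (fun x _ => (hfd x).continuousAt.continuousWithinAt) ?_ ?_
        · intro x _; exact (hfd x).differentiableAt.differentiableWithinAt
        · intro x hx
          rw [(hfd x).deriv]
          have : φ 0 ≤ φ x := hφmono (le_of_lt (by simpa using hx))
          linarith [hφ0 ▸ this]
      have := this (Set.self_mem_Ici) (Set.mem_Ici.mpr h) h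
      linarith [hf0 ▸ this]
    · have : AntitoneOn f (Set.Iic 0) := by
        refine antitoneOn_of_deriv_nonpos (convex_Iic 0)
          (fun x _ => (hfd x).continuousAt.continuousWithinAt) ?_ ?_
        · intro x _; exact (hfd x).differentiableAt.differentiableWithinAt
        · intro x hx
          rw [(hfd x).deriv]
          have : φ x ≤ φ 0 := hφmono (le_of_lt (by simpa using hx))
          linarith [hφ0 ▸ this]
      have := this (Set.mem_Iic.mpr h.le) (Set.self_mem_Iic) h.le
      linarith [hf0 ▸ this]
  have hlog : Real.log (g l) ≤ l * p + l ^ 2 / 8 := by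
    simp only [hf] at hfnonneg; linarith
  calc g l = Real.exp (Real.log (g l)) := (Real.exp_log (hgpos l)).symm
    _ ≤ Real.exp (l * p + l ^ 2 / 8) := Real.exp_le_exp.mpr hlog


/-- mgf bound for a single [0,1]-valued variable. -/
lemma mgf_le_of_Icc (Pm : Measure Ω) [IsProbabilityMeasure Pm]
    {Y : Ω → ℝ} (hYm : Measurable Y) (hYb : ∀ ω, Y ω ∈ Set.Icc (0:ℝ) 1)
    {m : ℝ} (hm : ∫ ω, Y ω ∂Pm = m) (l : ℝ) :
    mgf Y Pm l ≤ Real.exp (l * m + l ^ 2 / 8) := by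
  have hYint : Integrable Y Pm := by
    refine Integrable.mono' (integrable_const 1) hYm.aestronglyMeasurable ?_
    refine Filter.Eventually.of_forall fun ω => ?_
    have := hYb ω
    rw [Real.norm_eq_abs, abs_of_nonneg this.1]; exact this.2
  have hm0 : 0 ≤ m := by
    rw [← hm]; exact integral_nonneg fun ω => (hYb ω).1
  have hm1 : m ≤ 1 := by
    rw [← hm]
    calc ∫ ω, Y ω ∂Pm ≤ ∫ _ω, (1:ℝ) ∂Pm := integral_mono hYint (integrable_const 1)
          (fun ω => (hYb ω).2)
      _ = 1 := by simp
  have hconv : ∀ ω, Real.exp (l * Y ω) ≤ 1 - Y ω + Y ω * Real.exp l := by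
    intro ω
    have h := (hYb ω)
    have := convexOn_exp.2 (Set.mem_univ (0:ℝ)) (Set.mem_univ l)
      (by linarith [h.2] : (0:ℝ) ≤ 1 - Y ω) h.1 (by ring)
    simpa [mul_comm] using this
  have hint2 : Integrable (fun ω => 1 - Y ω + Y ω * Real.exp l) Pm := by
    exact ((integrable_const 1).sub hYint).add (hYint.mul_const _)
  have hintexp : Integrable (fun ω => Real.exp (l * Y ω)) Pm := by
    refine Integrable.mono' (integrable_const (Real.exp |l|)) ?_ ?_
    · exact (hYm.const_mul l).exp.aestronglyMeasurable
    · refine Filter.Eventually.of_forall fun ω => ?_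
      rw [Real.norm_eq_abs, abs_of_nonneg (Real.exp_pos _).le, Real.exp_le_exp]
      calc l * Y ω ≤ |l * Y ω| := le_abs_self _
        _ = |l| * |Y ω| := abs_mul _ _
        _ ≤ |l| * 1 := by
            refine mul_le_mul_of_nonneg_left ?_ (abs_nonneg l)
            rw [abs_of_nonneg (hYb ω).1]; exact (hYb ω).2
        _ = |l| := mul_one _
  calc mgf Y Pm l = ∫ ω, Real.exp (l * Y ω) ∂Pm := rfl
    _ ≤ ∫ ω, (1 - Y ω + Y ω * Real.exp l) ∂Pm :=
        integral_mono hintexp hint2 hconv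
    _ = 1 - m + m * Real.exp l := by
        have e1 : ∫ ω, (1 - Y ω + Y ω * Real.exp l) ∂Pm
            = (∫ ω, (1 - Y ω) ∂Pm) + ∫ ω, Y ω * Real.exp l ∂Pm :=
          integral_add ((integrable_const 1).sub hYint) (hYint.mul_const _)
        have e2 : ∫ ω, (1 - Y ω) ∂Pm = (∫ _ω, (1:ℝ) ∂Pm) - ∫ ω, Y ω ∂Pm :=
          integral_sub (integrable_const 1) hYint
        have e3 : ∫ ω, Y ω * Real.exp l ∂Pm = (∫ ω, Y ω ∂Pm) * Real.exp l :=
          integral_mul_const _ _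
        rw [e1, e2, e3, hm]
        simp
    _ ≤ Real.exp (l * m + l ^ 2 / 8) := hoeffding_core hm0 hm1 l

section Tail

variable {K : ℕ} (Pm : Measure Ω) [IsProbabilityMeasure Pm]
  (X : Fin K → ℕ → Ω → ℝ)
  (hmeas : ∀ i k, Measurable (X i k))
  (hbound : ∀ i k ω, X i k ω ∈ Set.Icc (0 : ℝ) 1)
  (μv : Fin K → ℝ)
  (hmean : ∀ i k, ∫ ω, X i k ω ∂Pm = μv i)
  (hindep : iIndepFun (fun p : Fin K × ℕ => X p.1 p.2) Pm)

include hmeas in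
lemma armSum_measurable (j : Fin K) (s : ℕ) :
    Measurable (fun ω => ∑ k ∈ Finset.range s, X j k ω) :=
  Finset.measurable_sum _ (fun k _ => hmeas j k)

include hmeas hbound in
lemma armSum_exp_integrable (j : Fin K) (s : ℕ) (l : ℝ) :
    Integrable (fun ω => Real.exp (l * ∑ k ∈ Finset.range s, X j k ω)) Pm := by
  refine Integrable.mono' (integrable_const (Real.exp (|l| * s))) ?_ ?_
  · exact ((armSum_measurable X hmeas j s).const_mul l).exp.aestronglyMeasurable
  · refine Filter.Eventually.of_forall fun ω => ?_
    rw [Real.norm_eq_abs, abs_of_nonneg (Real.exp_pos _).le, Real.exp_le_exp]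
    calc l * ∑ k ∈ Finset.range s, X j k ω ≤ |l| * |∑ k ∈ Finset.range s, X j k ω| := by
          rw [← abs_mul]; exact le_abs_self _
      _ ≤ |l| * s := by
          refine mul_le_mul_of_nonneg_left ?_ (abs_nonneg l)
          rw [abs_of_nonneg (Finset.sum_nonneg fun k _ => (hbound j k ω).1)]
          calc ∑ k ∈ Finset.range s, X j k ω ≤ ∑ _k ∈ Finset.range s, (1:ℝ) :=
                Finset.sum_le_sum fun k _ => (hbound j k ω).2
            _ = s := by simp

include hmeas hbound hmean hindep in
lemma armSum_mgf_le (j : Fin K) (s : ℕ) (l : ℝ) :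
    mgf (fun ω => ∑ k ∈ Finset.range s, X j k ω) Pm l ≤
      Real.exp (l * (s * μv j) + s * l ^ 2 / 8) := by
  classical
  set F : Finset (Fin K × ℕ) := ({j} : Finset (Fin K)) ×ˢ Finset.range s with hF
  have hfun : (fun ω => ∑ k ∈ Finset.range s, X j k ω)
      = ∑ p ∈ F, (fun p : Fin K × ℕ => X p.1 p.2) p := by
    funext ω
    simp [hF, Finset.sum_product, Finset.sum_apply]
  rw [hfun, hindep.mgf_sum (fun p => hmeas p.1 p.2) F]
  have hcard : F.card = s := by simp [hF]
  calc ∏ p ∈ F, mgf (X p.1 p.2) Pm l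
      ≤ ∏ _p ∈ F, Real.exp (l * μv j + l ^ 2 / 8) := by
        refine Finset.prod_le_prod (fun p _ => mgf_nonneg) (fun p hp => ?_)
        have hpj : p.1 = j := by
          simp only [hF, Finset.mem_product, Finset.mem_singleton] at hp
          exact hp.1
        rw [← hpj] at *
        exact mgf_le_of_Icc Pm (hmeas p.1 p.2) (hbound p.1 p.2) (hmean p.1 p.2) l
    _ = Real.exp (l * (s * μv j) + s * l ^ 2 / 8) := by
        rw [Finset.prod_const, hcard, ← Real.exp_nat_mul]
        congr 1
        ring

include hmeas hbound hmean hindep in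
lemma armSum_tail_upper (j : Fin K) (s : ℕ) (hs : 1 ≤ s) (L : ℝ) (hL : 0 ≤ L) :
    (Pm {ω | (s : ℝ) * μv j + Real.sqrt (2 * s * L) ≤
        ∑ k ∈ Finset.range s, X j k ω}).toReal ≤ Real.exp (-(4 * L)) := by
  set ε := Real.sqrt (2 * s * L) with hε
  have hsL : (0:ℝ) ≤ 2 * s * L := by positivity
  have hε2 : ε ^ 2 = 2 * s * L := Real.sq_sqrt hsL
  have hε0 : 0 ≤ ε := Real.sqrt_nonneg _
  have hs0 : (0:ℝ) < s := by exact_mod_cast hs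
  set l0 : ℝ := 4 * ε / s with hl0
  have hl00 : 0 ≤ l0 := by positivity
  have h1 := measure_ge_le_exp_mul_mgf (μ := Pm)
    (X := fun ω => ∑ k ∈ Finset.range s, X j k ω) ((s : ℝ) * μv j + ε) hl00
    (armSum_exp_integrable Pm X hmeas hbound j s l0)
  have h2 := armSum_mgf_le Pm X hmeas hbound μv hmean hindep j s l0
  have key : -l0 * ((s : ℝ) * μv j + ε) + (l0 * (s * μv j) + s * l0 ^ 2 / 8)
      = -(4 * L) := by
    rw [hl0]; field_simp
    linear_combination (-4 : ℝ) * hε2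
  calc (Pm {ω | (s : ℝ) * μv j + ε ≤ ∑ k ∈ Finset.range s, X j k ω}).toReal
      ≤ Real.exp (-l0 * ((s:ℝ) * μv j + ε)) *
        mgf (fun ω => ∑ k ∈ Finset.range s, X j k ω) Pm l0 := h1
    _ ≤ Real.exp (-l0 * ((s:ℝ) * μv j + ε)) * Real.exp (l0 * (s * μv j) + s * l0 ^ 2 / 8) :=
        mul_le_mul_of_nonneg_left h2 (Real.exp_pos _).le
    _ = Real.exp (-(4 * L)) := by rw [← Real.exp_add, key]

include hmeas hbound hmean hindep in
lemma armSum_tail_lower (j : Fin K) (s : ℕ) (hs : 1 ≤ s) (L : ℝ) (hL : 0 ≤ L) :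
    (Pm {ω | ∑ k ∈ Finset.range s, X j k ω ≤
        (s : ℝ) * μv j - Real.sqrt (2 * s * L)}).toReal ≤ Real.exp (-(4 * L)) := by
  set ε := Real.sqrt (2 * s * L) with hε
  have hsL : (0:ℝ) ≤ 2 * s * L := by positivity
  have hε2 : ε ^ 2 = 2 * s * L := Real.sq_sqrt hsL
  have hε0 : 0 ≤ ε := Real.sqrt_nonneg _
  have hs0 : (0:ℝ) < s := by exact_mod_cast hs
  set l1 : ℝ := -(4 * ε / s) with hl1
  have hl10 : l1 ≤ 0 := by
    rw [hl1, neg_nonpos]; positivity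
  have h1 := measure_le_le_exp_mul_mgf (μ := Pm)
    (X := fun ω => ∑ k ∈ Finset.range s, X j k ω) ((s : ℝ) * μv j - ε) hl10
    (armSum_exp_integrable Pm X hmeas hbound j s l1)
  have h2 := armSum_mgf_le Pm X hmeas hbound μv hmean hindep j s l1
  have key : -l1 * ((s : ℝ) * μv j - ε) + (l1 * (s * μv j) + s * l1 ^ 2 / 8)
      = -(4 * L) := by
    rw [hl1]; field_simp
    linear_combination (-4 : ℝ) * hε2
  calc (Pm {ω | ∑ k ∈ Finset.range s, X j k ω ≤ (s : ℝ) * μv j - ε}).toReal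
      ≤ Real.exp (-l1 * ((s:ℝ) * μv j - ε)) *
        mgf (fun ω => ∑ k ∈ Finset.range s, X j k ω) Pm l1 := h1
    _ ≤ Real.exp (-l1 * ((s:ℝ) * μv j - ε)) * Real.exp (l1 * (s * μv j) + s * l1 ^ 2 / 8) :=
        mul_le_mul_of_nonneg_left h2 (Real.exp_pos _).le
    _ = Real.exp (-(4 * L)) := by rw [← Real.exp_add, key]

end Tail


lemma playCount_succ {K : ℕ} (I : ℕ → Ω → Fin K) (t : ℕ) (i : Fin K) (ω : Ω) :
    playCount I (t + 1) i ω = playCount I t i ω + if I t ω = i then 1 else 0 := by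
  simp only [playCount, Finset.range_add_one, Finset.filter_insert]
  split_ifs with h
  · rw [Finset.card_insert_of_notMem (by simp [Finset.mem_filter])]
  · simp

lemma playCount_mono {K : ℕ} (I : ℕ → Ω → Fin K) {t t' : ℕ} (h : t ≤ t') (i : Fin K) (ω : Ω) :
    playCount I t i ω ≤ playCount I t' i ω :=
  Finset.card_le_card (Finset.filter_subset_filter _ (Finset.range_subset_range.2 h))

lemma playCount_lt {K : ℕ} (I : ℕ → Ω → Fin K) {t t' : ℕ} (h : t < t') (i : Fin K) (ω : Ω)
    (hI : I t ω = i) : playCount I t i ω < playCount I t' i ω := by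
  have h1 : playCount I t i ω < playCount I (t + 1) i ω := by
    rw [playCount_succ, if_pos hI]; omega
  exact lt_of_lt_of_le h1 (playCount_mono I h i ω)

lemma playCount_le {K : ℕ} (I : ℕ → Ω → Fin K) (t : ℕ) (i : Fin K) (ω : Ω) :
    playCount I t i ω ≤ t :=
  le_trans (Finset.card_filter_le _ _) (Finset.card_range t).le

lemma playCount_measurable {K : ℕ} (I : ℕ → Ω → Fin K) (hImeas : ∀ t, Measurable (I t))
    (t : ℕ) (i : Fin K) : Measurable (fun ω => playCount I t i ω) := by
  have : (fun ω => playCount I t i ω)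
      = fun ω => ∑ t' ∈ Finset.range t, if I t' ω = i then 1 else 0 := by
    funext ω; rw [playCount, Finset.card_filter]
  rw [this]
  refine Finset.measurable_sum _ (fun t' _ => Measurable.ite ?_ measurable_const measurable_const)
  exact (hImeas t') (measurableSet_singleton i)

lemma playCount_bound {K : ℕ} (I : ℕ → Ω → Fin K)
    (hInit : ∀ (ω : Ω) (t : ℕ) (ht : t < K), I t ω = ⟨t, ht⟩)
    (n : ℕ) (i : Fin K) (ω : Ω) (u : ℕ) (hu : 1 ≤ u) :
    playCount I n i ω ≤ u +
      ((Finset.Ico K n).filter (fun t => I t ω = i ∧ u ≤ playCount I t i ω)).card := by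
  classical
  set S := (Finset.range n).filter (fun t => I t ω = i) with hS
  have hsplit : playCount I n i ω
      = (S.filter (fun t => playCount I t i ω < u)).card
        + (S.filter (fun t => ¬ playCount I t i ω < u)).card := by
    rw [playCount, ← Finset.card_filter_add_card_filter_not
      (s := S) (p := fun t => playCount I t i ω < u)]
  have h1 : (S.filter (fun t => playCount I t i ω < u)).card ≤ u := by
    have := Finset.card_le_card_of_injOn (f := fun t => playCount I t i ω)
      (s := S.filter (fun t => playCount I t i ω < u)) (t := Finset.range u)
      (fun t ht => by
        simp only [Finset.mem_coe, Finset.mem_filter] at ht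
        exact Finset.mem_range.2 ht.2)
      (fun t₁ h₁ t₂ h₂ heq => by
        simp only [Finset.coe_filter, Set.mem_setOf_eq, hS, Finset.mem_filter] at h₁ h₂
        rcases lt_trichotomy t₁ t₂ with h | h | h
        · exact absurd heq (ne_of_lt (playCount_lt I h i ω h₁.1.2))
        · exact h
        · exact absurd heq.symm (ne_of_lt (playCount_lt I h i ω h₂.1.2)))
    simpa using this
  have h2 : (S.filter (fun t => ¬ playCount I t i ω < u)).card ≤
      ((Finset.Ico K n).filter (fun t => I t ω = i ∧ u ≤ playCount I t i ω)).card := by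
    refine Finset.card_le_card (fun t ht => ?_)
    simp only [hS, Finset.mem_filter, Finset.mem_range, not_lt] at ht
    obtain ⟨⟨htn, hti⟩, htu⟩ := ht
    have htK : K ≤ t := by
      by_contra h
      push_neg at h
      have hzero : playCount I t i ω = 0 := by
        rw [playCount, Finset.card_eq_zero, Finset.filter_eq_empty_iff]
        intro t' ht'
        rw [Finset.mem_range] at ht'
        rw [hInit ω t' (lt_trans ht' h)]
        rw [hInit ω t h] at hti
        rw [← hti]
        simp only [ne_eq, Fin.mk.injEq]
        omega
      omega
    simp only [Finset.mem_filter, Finset.mem_Ico]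
    exact ⟨⟨htK, htn⟩, hti, htu⟩
  omega

lemma per_round_bound
    (Pm : Measure Ω) [IsProbabilityMeasure Pm]
    (K : ℕ) (hK : 0 < K) (n : ℕ)
    (X : Fin K → ℕ → Ω → ℝ)
    (hmeas : ∀ i k, Measurable (X i k))
    (hbound : ∀ i k ω, X i k ω ∈ Set.Icc (0 : ℝ) 1)
    (μv : Fin K → ℝ)
    (hmean : ∀ i k, ∫ ω, X i k ω ∂Pm = μv i)
    (hindep : iIndepFun (fun p : Fin K × ℕ => X p.1 p.2) Pm)
    (I : ℕ → Ω → Fin K)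
    (hInit : ∀ (ω : Ω) (t : ℕ) (ht : t < K), I t ω = ⟨t, ht⟩)
    (hUCB : ∀ (ω : Ω) (t : ℕ), K ≤ t → ∀ j : Fin K,
      ucbIndex X I j t ω ≤ ucbIndex X I (I t ω) t ω)
    (μstar : ℝ) (i : Fin K) (hsub : 0 < μstar - μv i)
    (istar : Fin K) (histar : μv istar = μstar)
    (u t : ℕ) (hu1 : 1 ≤ u)
    (hun : 8 * Real.log n / (μstar - μv i) ^ 2 ≤ u)
    (htK : K ≤ t) (htn : t ≤ n) :
    (Pm {ω | I t ω = i ∧ u ≤ playCount I t i ω}).toReal ≤ 2 / (t : ℝ) ^ 2 := by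
  classical
  have ht1 : 1 ≤ t := le_trans hK htK
  have ht0 : (0:ℝ) < t := by exact_mod_cast ht1
  set L := Real.log t with hLdef
  have hL0 : 0 ≤ L := Real.log_nonneg (by exact_mod_cast ht1)
  set A : ℕ → Set Ω := fun s => {ω | ∑ k ∈ Finset.range s, X istar k ω ≤
    (s : ℝ) * μv istar - Real.sqrt (2 * s * L)} with hA
  set B : ℕ → Set Ω := fun s => {ω | (s : ℝ) * μv i + Real.sqrt (2 * s * L) ≤
    ∑ k ∈ Finset.range s, X i k ω} with hB
  -- inclusion
  have hincl : {ω | I t ω = i ∧ u ≤ playCount I t i ω} ⊆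
      ⋃ s ∈ Finset.Icc 1 t, (A s ∪ B s) := by
    intro ω hω
    obtain ⟨hIt, hu⟩ := hω
    set s' := playCount I t i ω with hs'def
    set s := playCount I t istar ω with hsdef
    have hs'1 : 1 ≤ s' := le_trans hu1 hu
    have hs't : s' ≤ t := playCount_le I t i ω
    have hs1 : 1 ≤ s := by
      have hmem : (istar : Fin K).val ∈ (Finset.range t).filter (fun t' => I t' ω = istar) := by
        refine Finset.mem_filter.2 ⟨Finset.mem_range.2 (lt_of_lt_of_le istar.isLt htK), ?_⟩
        rw [hInit ω istar.val istar.isLt]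
      exact Finset.card_pos.2 ⟨_, hmem⟩
    have hst : s ≤ t := playCount_le I t istar ω
    by_contra hnot
    simp only [Set.mem_iUnion, not_exists] at hnot
    have hAs : ω ∉ A s := fun h =>
      hnot s (Finset.mem_Icc.2 ⟨hs1, hst⟩) (Set.mem_union_left _ h)
    have hBs' : ω ∉ B s' := fun h =>
      hnot s' (Finset.mem_Icc.2 ⟨hs'1, hs't⟩) (Set.mem_union_right _ h)
    simp only [hA, Set.mem_setOf_eq, not_le] at hAs
    simp only [hB, Set.mem_setOf_eq, not_le] at hBs'
    have hucb := hUCB ω t htK istar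
    rw [hIt] at hucb
    have hs0 : (0:ℝ) < s := by exact_mod_cast hs1
    have hs'0 : (0:ℝ) < s' := by exact_mod_cast hs'1
    have hsqrt_eq : ∀ m : ℕ, (0:ℝ) < m →
        Real.sqrt (2 * m * L) = m * Real.sqrt (2 * L / m) := by
      intro m hm
      rw [show (2 * (m:ℝ) * L) = (m:ℝ)^2 * (2 * L / m) by field_simp,
        Real.sqrt_mul (sq_nonneg _), Real.sqrt_sq hm.le]
    -- lower bound on ucbIndex istar
    have hlow : μstar < ucbIndex X I istar t ω := by
      rw [ucbIndex, empMean, ← hsdef, ← hLdef]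
      have h1 : ((s:ℝ) * μv istar - Real.sqrt (2 * s * L)) / s <
          (∑ k ∈ Finset.range s, X istar k ω) / s := by
        exact div_lt_div_of_pos_right hAs hs0
      rw [hsqrt_eq s hs0] at h1
      rw [histar] at h1
      have h2 : ((s:ℝ) * μstar - s * Real.sqrt (2 * L / s)) / s
          = μstar - Real.sqrt (2 * L / s) := by field_simp
      rw [h2] at h1
      linarith [h1]
    -- upper bound on ucbIndex i
    have hhigh : ucbIndex X I i t ω < μv i + 2 * Real.sqrt (2 * L / s') := by
      rw [ucbIndex, empMean, ← hs'def, ← hLdef]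
      have h1 : (∑ k ∈ Finset.range s', X i k ω) / s' <
          ((s':ℝ) * μv i + Real.sqrt (2 * s' * L)) / s' :=
        div_lt_div_of_pos_right hBs' hs'0
      rw [hsqrt_eq s' hs'0] at h1
      have h2 : ((s':ℝ) * μv i + s' * Real.sqrt (2 * L / s')) / s'
          = μv i + Real.sqrt (2 * L / s') := by field_simp
      rw [h2] at h1
      linarith [h1]
    -- the gap condition
    have hgap : 2 * Real.sqrt (2 * L / s') ≤ μstar - μv i := by
      have hd : (0:ℝ) < μstar - μv i := hsub
      have hLn : L ≤ Real.log n := by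
        rw [hLdef]
        exact Real.log_le_log ht0 (by exact_mod_cast htn)
      have h8 : 8 * L ≤ (s' : ℝ) * (μstar - μv i) ^ 2 := by
        have hu' : 8 * Real.log n / (μstar - μv i) ^ 2 ≤ (s' : ℝ) := by
          calc 8 * Real.log n / (μstar - μv i) ^ 2 ≤ (u:ℝ) := hun
            _ ≤ (s':ℝ) := by exact_mod_cast hu
        calc 8 * L ≤ 8 * Real.log n := by linarith
          _ = (8 * Real.log n / (μstar - μv i) ^ 2) * (μstar - μv i) ^ 2 := by
              field_simp
          _ ≤ (s' : ℝ) * (μstar - μv i) ^ 2 := by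
              exact mul_le_mul_of_nonneg_right hu' (sq_nonneg _)
      have h3 : 2 * L / s' ≤ ((μstar - μv i) / 2) ^ 2 := by
        rw [div_le_iff₀ hs'0]
        nlinarith [h8]
      calc 2 * Real.sqrt (2 * L / s') ≤ 2 * ((μstar - μv i) / 2) := by
            have := Real.sqrt_le_sqrt h3
            rw [Real.sqrt_sq (by linarith : (0:ℝ) ≤ (μstar - μv i)/2)] at this
            linarith
        _ = μstar - μv i := by ring
    linarith [hlow, hhigh, hgap, hucb]
  -- measure bound
  have hAmeas : ∀ s, MeasurableSet (A s) := by
    intro s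
    exact measurableSet_le (armSum_measurable X hmeas istar s) measurable_const
  have hBmeas : ∀ s, MeasurableSet (B s) := by
    intro s
    exact measurableSet_le measurable_const (armSum_measurable X hmeas i s)
  have hmb : Pm {ω | I t ω = i ∧ u ≤ playCount I t i ω} ≤
      ∑ s ∈ Finset.Icc 1 t, (Pm (A s) + Pm (B s)) := by
    refine le_trans (measure_mono hincl) ?_
    refine le_trans (measure_biUnion_finset_le _ _) ?_
    exact Finset.sum_le_sum fun s _ => measure_union_le _ _
  have hexp : Real.exp (-(4 * L)) = 1 / (t:ℝ) ^ 4 := by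
    have h4 : Real.exp (4 * L) = (t:ℝ) ^ 4 := by
      rw [hLdef, show (4 : ℝ) * Real.log t = ((4:ℕ):ℝ) * Real.log t by norm_num,
        Real.exp_nat_mul, Real.exp_log ht0]
    rw [Real.exp_neg, h4, one_div]
  have hterm : ∀ s ∈ Finset.Icc 1 t, (Pm (A s)).toReal + (Pm (B s)).toReal ≤ 2 / (t:ℝ)^4 := by
    intro s hs
    rw [Finset.mem_Icc] at hs
    have h1 := armSum_tail_lower Pm X hmeas hbound μv hmean hindep istar s hs.1 L hL0
    have h2 := armSum_tail_upper Pm X hmeas hbound μv hmean hindep i s hs.1 L hL0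
    rw [hexp] at h1 h2
    have hA1 : (Pm (A s)).toReal ≤ 1/(t:ℝ)^4 := h1
    have hB1 : (Pm (B s)).toReal ≤ 1/(t:ℝ)^4 := h2
    have : 2 / (t:ℝ)^4 = 1/(t:ℝ)^4 + 1/(t:ℝ)^4 := by ring
    linarith
  have hsumfin : (∑ s ∈ Finset.Icc 1 t, (Pm (A s) + Pm (B s))) ≠ ⊤ := by
    refine (ENNReal.sum_lt_top.2 ?_).ne
    intro s _
    exact ENNReal.add_lt_top.2 ⟨measure_lt_top _ _, measure_lt_top _ _⟩
  calc (Pm {ω | I t ω = i ∧ u ≤ playCount I t i ω}).toReal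
      ≤ (∑ s ∈ Finset.Icc 1 t, (Pm (A s) + Pm (B s))).toReal :=
        ENNReal.toReal_mono hsumfin hmb
    _ = ∑ s ∈ Finset.Icc 1 t, ((Pm (A s)).toReal + (Pm (B s)).toReal) := by
        rw [ENNReal.toReal_sum (fun s _ => by
          exact (ENNReal.add_lt_top.2 ⟨measure_lt_top _ _, measure_lt_top _ _⟩).ne)]
        refine Finset.sum_congr rfl fun s _ => ?_
        rw [ENNReal.toReal_add (measure_ne_top _ _) (measure_ne_top _ _)]
    _ ≤ ∑ _s ∈ Finset.Icc 1 t, (2 / (t:ℝ)^4) := Finset.sum_le_sum hterm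
    _ = (t:ℝ) * (2 / (t:ℝ)^4) := by
        rw [Finset.sum_const, Nat.card_Icc]
        simp
    _ ≤ 2 / (t:ℝ)^2 := by
        have ht1' : (1:ℝ) ≤ t := by exact_mod_cast ht1
        have heq : (t:ℝ) * (2 / (t:ℝ)^4) = 2 / (t:ℝ)^3 := by field_simp
        rw [heq, div_le_div_iff₀ (by positivity) (by positivity)]
        nlinarith [ht0, ht1']

end UCBAux

/-- Per-arm UCB1 bound (Auer et al. 2002): for a suboptimal arm `i` with gap
δᵢ = μ* − μᵢ > 0, the expected number of plays of arm `i` after `n` rounds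
under UCB1 is at most 8·(ln n)/δᵢ² + 1 + π²/3. -/
theorem ucb1_expected_plays_of_suboptimal_arm
    (Pm : Measure Ω) [IsProbabilityMeasure Pm]
    (K : ℕ) (hK : 0 < K) (n : ℕ)
    (X : Fin K → ℕ → Ω → ℝ)
    (hmeas : ∀ i k, Measurable (X i k))
    (hbound : ∀ i k ω, X i k ω ∈ Set.Icc (0 : ℝ) 1)
    (μv : Fin K → ℝ)
    (hmean : ∀ i k, ∫ ω, X i k ω ∂Pm = μv i)
    (hiid : ∀ i k l, IdentDistrib (X i k) (X i l) Pm Pm)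
    (hindep : iIndepFun (fun p : Fin K × ℕ => X p.1 p.2) Pm)
    (I : ℕ → Ω → Fin K) (hImeas : ∀ t, Measurable (I t))
    -- each arm is played once initially
    (hInit : ∀ (ω : Ω) (t : ℕ) (ht : t < K), I t ω = ⟨t, ht⟩)
    -- afterwards, UCB1 plays the arm maximizing the UCB index
    (hUCB : ∀ (ω : Ω) (t : ℕ), K ≤ t → ∀ j : Fin K,
      ucbIndex X I j t ω ≤ ucbIndex X I (I t ω) t ω)
    (μstar : ℝ) (hstar : IsGreatest (Set.range μv) μstar)
    (i : Fin K) (hsub : 0 < μstar - μv i) :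
    ∫ ω, (playCount I n i ω : ℝ) ∂Pm ≤
      8 * Real.log n / (μstar - μv i) ^ 2 + 1 + Real.pi ^ 2 / 3 := by
  classical
  obtain ⟨istar, histar⟩ := hstar.1
  set x : ℝ := 8 * Real.log n / (μstar - μv i) ^ 2 with hxdef
  have hlogn : 0 ≤ Real.log n := by
    rcases Nat.eq_zero_or_pos n with h | h
    · simp [h]
    · exact Real.log_nonneg (by exact_mod_cast h)
  have hx0 : 0 ≤ x := by
    rw [hxdef]; positivity
  set u : ℕ := max 1 ⌈x⌉₊ with hudef
  have hu1 : 1 ≤ u := le_max_left _ _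
  have hux : x ≤ (u : ℝ) := by
    refine le_trans (Nat.le_ceil x) ?_
    exact_mod_cast Nat.cast_le.2 (le_max_right 1 ⌈x⌉₊)
  have huu : (u : ℝ) ≤ x + 1 := by
    rw [hudef, Nat.cast_max]
    refine max_le (by push_cast; linarith) ?_
    exact (Nat.ceil_lt_add_one hx0).le
  set E : ℕ → Set Ω := fun t => {ω | I t ω = i ∧ u ≤ playCount I t i ω} with hEdef
  have hEmeas : ∀ t, MeasurableSet (E t) := by
    intro t
    have h1 : MeasurableSet {ω | I t ω = i} := (hImeas t) (measurableSet_singleton i)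
    have h2 : MeasurableSet {ω | u ≤ playCount I t i ω} :=
      (playCount_measurable I hImeas t i) measurableSet_Ici
    exact h1.inter h2
  have hpath : ∀ ω, (playCount I n i ω : ℝ) ≤ (u : ℝ) +
      ∑ t ∈ Finset.Ico K n, Set.indicator (E t) (fun _ => (1:ℝ)) ω := by
    intro ω
    have h := playCount_bound I hInit n i ω u hu1
    have hcast : (playCount I n i ω : ℝ) ≤ (u : ℝ) +
        (((Finset.Ico K n).filter (fun t => I t ω = i ∧ u ≤ playCount I t i ω)).card : ℝ) := by
      exact_mod_cast h
    refine le_trans hcast ?_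
    have heq : (((Finset.Ico K n).filter
        (fun t => I t ω = i ∧ u ≤ playCount I t i ω)).card : ℝ)
        = ∑ t ∈ Finset.Ico K n, Set.indicator (E t) (fun _ => (1:ℝ)) ω := by
      rw [Finset.card_filter]
      push_cast
      refine Finset.sum_congr rfl fun t _ => ?_
      rw [Set.indicator_apply]
      simp [hEdef, Set.mem_setOf_eq]
    linarith
  have hNmeas : Measurable (fun ω => (playCount I n i ω : ℝ)) :=
    measurable_from_top.comp (playCount_measurable I hImeas n i)
  have hNint : Integrable (fun ω => (playCount I n i ω : ℝ)) Pm := by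
    refine Integrable.mono' (integrable_const (n : ℝ)) hNmeas.aestronglyMeasurable ?_
    refine Filter.Eventually.of_forall fun ω => ?_
    rw [Real.norm_eq_abs, abs_of_nonneg (by positivity)]
    exact_mod_cast playCount_le I n i ω
  have hIndint : ∀ t, Integrable (Set.indicator (E t) (fun _ => (1:ℝ))) Pm := fun t =>
    (integrable_const (1:ℝ)).indicator (hEmeas t)
  have hRint : Integrable (fun ω => (u : ℝ) +
      ∑ t ∈ Finset.Ico K n, Set.indicator (E t) (fun _ => (1:ℝ)) ω) Pm := by
    refine (integrable_const ((u : ℝ))).add ?_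
    exact integrable_finset_sum _ fun t _ => hIndint t
  have hstep1 : ∫ ω, (playCount I n i ω : ℝ) ∂Pm ≤
      (u : ℝ) + ∑ t ∈ Finset.Ico K n, (Pm (E t)).toReal := by
    calc ∫ ω, (playCount I n i ω : ℝ) ∂Pm
        ≤ ∫ ω, ((u : ℝ) + ∑ t ∈ Finset.Ico K n,
            Set.indicator (E t) (fun _ => (1:ℝ)) ω) ∂Pm :=
          integral_mono hNint hRint hpath
      _ = (u : ℝ) + ∑ t ∈ Finset.Ico K n, (Pm (E t)).toReal := by
          rw [integral_add (integrable_const _) (integrable_finset_sum _ fun t _ => hIndint t),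
            integral_const, integral_finset_sum _ fun t _ => hIndint t]
          simp only [probReal_univ, measure_univ, ENNReal.toReal_one, one_smul, smul_eq_mul, one_mul]
          congr 1
          refine Finset.sum_congr rfl fun t _ => ?_
          rw [integral_indicator_const (1:ℝ) (hEmeas t)]
          simp [Measure.real]
  have hstep2 : ∑ t ∈ Finset.Ico K n, (Pm (E t)).toReal ≤
      ∑ t ∈ Finset.Ico K n, 2 / (t : ℝ) ^ 2 := by
    refine Finset.sum_le_sum fun t ht => ?_
    rw [Finset.mem_Ico] at ht
    exact per_round_bound Pm K hK n X hmeas hbound μv hmean hindep I hInit hUCB μstar i hsub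
      istar histar u t hu1 hux ht.1 ht.2.le
  have hstep3 : ∑ t ∈ Finset.Ico K n, 2 / (t : ℝ) ^ 2 ≤ Real.pi ^ 2 / 3 := by
    have hsum := hasSum_zeta_two
    have h1 : ∑ t ∈ Finset.Ico K n, (1:ℝ) / (t : ℝ) ^ 2 ≤ Real.pi ^ 2 / 6 := by
      rw [← hsum.tsum_eq]
      exact hsum.summable.sum_le_tsum (Finset.Ico K n) (fun b _ => by positivity)
    have h2 : ∑ t ∈ Finset.Ico K n, 2 / (t : ℝ) ^ 2
        = 2 * ∑ t ∈ Finset.Ico K n, (1:ℝ) / (t : ℝ) ^ 2 := by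
      rw [Finset.mul_sum]
      refine Finset.sum_congr rfl fun t _ => by ring
    rw [h2]
    linarith
  calc ∫ ω, (playCount I n i ω : ℝ) ∂Pm
      ≤ (u : ℝ) + ∑ t ∈ Finset.Ico K n, (Pm (E t)).toReal := hstep1
    _ ≤ (u : ℝ) + Real.pi ^ 2 / 3 := by linarith [hstep2, hstep3]
    _ ≤ 8 * Real.log n / (μstar - μv i) ^ 2 + 1 + Real.pi ^ 2 / 3 := by
        rw [← hxdef]; linarith
end
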